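/- For unit vectors u, v in a real inner product space with ⟨u,v⟩ = α, the operator norm of the map x ↦ u⟨u,x⟩ − v⟨v,x⟩ equals √(1−α²). -/

import Mathlib

open scoped InnerProductSpace

set_option maxHeartbeats 1000000 in
theorem stmt2 {V : Type*} [NormedAddCommGroup V] [InnerProductSpace ℝ V]
    (u v : V) (hu : ‖u‖ = 1) (hv : ‖v‖ = 1) (α : ℝ) (hα : ⟪u, v⟫_ℝ = α) :
    ‖(innerSL ℝ u).smulRight u - (innerSL ℝ v).smulRight v‖ = Real.sqrt (1 - α ^ 2) := by
  set T := (innerSL ℝ u).smulRight u - (innerSL ℝ v).smulRight v with hT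
  have huu : ⟪u, u⟫_ℝ = 1 := by
    rw [real_inner_self_eq_norm_sq, hu]; norm_num
  have hvv : ⟪v, v⟫_ℝ = 1 := by
    rw [real_inner_self_eq_norm_sq, hv]; norm_num
  have hvu : ⟪v, u⟫_ℝ = α := by rw [real_inner_comm]; exact hα
  have habs : |α| ≤ 1 := by
    have := abs_real_inner_le_norm u v
    rwa [hα, hu, hv, mul_one] at this
  have hα2 : α ^ 2 ≤ 1 := by nlinarith [sq_abs α, abs_nonneg α]
  have hTx : ∀ x : V, T x = ⟪u, x⟫_ℝ • u - ⟪v, x⟫_ℝ • v := by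
    intro x; simp [hT]
  have hnorm : ∀ x : V, ‖T x‖ ^ 2 =
      ⟪u, x⟫_ℝ ^ 2 + ⟪v, x⟫_ℝ ^ 2 - 2 * α * (⟪u, x⟫_ℝ * ⟪v, x⟫_ℝ) := by
    intro x
    rw [← real_inner_self_eq_norm_sq, hTx]
    simp only [inner_sub_left, inner_sub_right, real_inner_smul_left, real_inner_smul_right,
      huu, hvv, hα, hvu]
    ring
  by_cases hc : α ^ 2 = 1
  · -- degenerate case: v = ±u, T = 0
    have hcase : α = 1 ∨ α = -1 := by
      have h : (α - 1) * (α + 1) = 0 := by nlinarith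
      rcases mul_eq_zero.mp h with h | h
      · exact Or.inl (by linarith)
      · exact Or.inr (by linarith)
    have hT0 : T = 0 := by
      rcases hcase with h | h
      · have hvu' : v = u := ((inner_eq_one_iff_of_norm_eq_one hu hv).mp (by rw [hα, h])).symm
        ext x
        simp [hTx, hvu']
      · have huv' : u = -v := by
          have h1 : ⟪u, -v⟫_ℝ = 1 := by rw [inner_neg_right, hα, h]; ring
          exact (inner_eq_one_iff_of_norm_eq_one hu (by rw [norm_neg, hv])).mp h1
        ext x
        simp [hTx, huv', inner_neg_left, inner_neg_right]
    rw [hT0, norm_zero, show (1:ℝ) - α ^ 2 = 0 by rw [hc]; ring, Real.sqrt_zero]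
  · have hlt : α ^ 2 < 1 := lt_of_le_of_ne hα2 hc
    have hkey : ∀ x : V, ‖T x‖ ^ 2 ≤ (1 - α ^ 2) * ‖x‖ ^ 2 := by
      intro x
      have h0 : (0:ℝ) ≤
          ‖(1 - α ^ 2) • x - (⟪u, x⟫_ℝ - α * ⟪v, x⟫_ℝ) • u - (⟪v, x⟫_ℝ - α * ⟪u, x⟫_ℝ) • v‖ ^ 2 :=
        sq_nonneg _
      rw [← real_inner_self_eq_norm_sq] at h0
      have hxu : ⟪x, u⟫_ℝ = ⟪u, x⟫_ℝ := real_inner_comm _ _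
      have hxv : ⟪x, v⟫_ℝ = ⟪v, x⟫_ℝ := real_inner_comm _ _
      simp only [inner_sub_left, inner_sub_right, real_inner_smul_left, real_inner_smul_right,
        huu, hvv, hα, hvu, hxu, hxv] at h0
      simp only [real_inner_self_eq_norm_sq] at h0
      rw [hnorm]
      nlinarith [h0, hlt]
    have hup : ‖T‖ ≤ Real.sqrt (1 - α ^ 2) := by
      apply T.opNorm_le_bound (Real.sqrt_nonneg _)
      intro x
      have h := hkey x
      have h1 : ‖T x‖ ≤ Real.sqrt ((1 - α ^ 2) * ‖x‖ ^ 2) := by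
        rw [← Real.sqrt_sq (norm_nonneg _)]
        exact Real.sqrt_le_sqrt h
      rwa [Real.sqrt_mul (by nlinarith), Real.sqrt_sq (norm_nonneg _)] at h1
    have hlo : Real.sqrt (1 - α ^ 2) ≤ ‖T‖ := by
      have h1 : ⟪u, u - v⟫_ℝ = 1 - α := by simp [inner_sub_right, huu, hα, hu]
      have h2 : ⟪v, u - v⟫_ℝ = α - 1 := by simp [inner_sub_right, hvu, hvv, hv]
      have hx : ‖u - v‖ ^ 2 = 2 - 2 * α := by
        rw [← real_inner_self_eq_norm_sq]
        simp only [inner_sub_left, inner_sub_right, huu, hvv, hα, hvu]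
        ring
      have hxe : ‖u - v‖ = Real.sqrt (2 - 2 * α) := by
        rw [← Real.sqrt_sq (norm_nonneg _), hx]
      have hT0 : ‖T (u - v)‖ ^ 2 = (1 - α ^ 2) * (2 - 2 * α) := by
        rw [hnorm, h1, h2]; ring
      have hTe : ‖T (u - v)‖ = Real.sqrt (1 - α ^ 2) * Real.sqrt (2 - 2 * α) := by
        rw [← Real.sqrt_sq (norm_nonneg _), hT0, Real.sqrt_mul (by nlinarith)]
      have hle := T.le_opNorm (u - v)
      rw [hTe, hxe] at hle
      have hpos : 0 < Real.sqrt (2 - 2 * α) := Real.sqrt_pos.mpr (by nlinarith)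
      exact le_of_mul_le_mul_right hle hpos
    exact le_antisymm hup hlo
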